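/- Let C ⊆ T(ℝ^d) be a subspace such that Δx ∈ C⊗T(ℝ^d) + T(ℝ^d)⊗C for every x ∈ C, where Δ is the deconcatenation coproduct (i.e. C is a coideal). Then the path variety 𝒱(C) is stable under concatenation: if X, Y ∈ 𝒱(C) then X ⊔ Y ∈ 𝒱(C). -/

import Mathlib

open scoped BigOperators TensorProduct

namespace PathVarieties

/-- Words over an alphabet `α`; the letters `{1,…,d}` of `ℝ^d` correspond to `α = Fin d`. -/
abbrev Word (α : Type*) := List α

/-- The tensor algebra `T(ℝ^d)`, identified with the free real vector space on words. -/
abbrev TA (α : Type*) := Word α →₀ ℝ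

/-- The list of all (riffle) shuffles of two words. -/
def shuffles {α : Type*} : Word α → Word α → List (Word α)
  | [], v => [v]
  | a :: u, [] => [a :: u]
  | a :: u, b :: v =>
      ((shuffles u (b :: v)).map (a :: ·)) ++ ((shuffles (a :: u) v).map (b :: ·))
termination_by u v => u.length + v.length
decreasing_by all_goals (simp only [List.length_cons]; omega)

/-- Shuffle product of two words, as an element of `T(ℝ^d)`. -/
noncomputable def shw {α : Type*} (u v : Word α) : TA α :=
  ((shuffles u v).map fun w => Finsupp.single w (1 : ℝ)).sum

/-- The shuffle product `⧢` on `T(ℝ^d)`, the bilinear extension of the shuffle of words. -/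
noncomputable def sh {α : Type*} (x y : TA α) : TA α :=
  x.sum fun u cu => y.sum fun v cv => (cu * cv) • shw u v

/-- Right halfshuffle `u ≻ v` of words (`v` nonempty): shuffle `u` with `v` minus its
last letter, then append the last letter of `v`.  (This is the unique bilinear operation
with `w ≻ a = wa` and `w ≻ (va) = (w≻v + v≻w)a`.) -/
noncomputable def rshw {α : Type*} (u v : Word α) : TA α :=
  ((shuffles u v.dropLast).map fun w =>
    Finsupp.single (w ++ v.drop (v.length - 1)) (1 : ℝ)).sum

/-- Right halfshuffle `≻` on `T^{≥1}(ℝ^d)`, extended bilinearly. -/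
noncomputable def rsh {α : Type*} (x y : TA α) : TA α :=
  x.sum fun u cu => y.sum fun v cv => (cu * cv) • rshw u v

/-- Left halfshuffle `u ≺ v` of words (`u` nonempty): the first letter of `u` followed by
the shuffle of the rest of `u` with `v`.  (This is the unique bilinear operation with
`a ≺ w = aw` and `(av) ≺ w = a(w≺v + v≺w)`.) -/
noncomputable def lshw {α : Type*} (u v : Word α) : TA α :=
  ((shuffles u.tail v).map fun w => Finsupp.single (u.take 1 ++ w) (1 : ℝ)).sum

/-- Left halfshuffle `≺` on `T^{≥1}(ℝ^d)`, extended bilinearly. -/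
noncomputable def lsh {α : Type*} (x y : TA α) : TA α :=
  x.sum fun u cu => y.sum fun v cv => (cu * cv) • lshw u v

/-- The antipode `𝒜`, with `𝒜(i₁⋯iₙ) = (−1)ⁿ iₙ⋯i₁`. -/
noncomputable def antipode {α : Type*} (x : TA α) : TA α :=
  x.sum fun w c => Finsupp.single w.reverse (((-1 : ℝ) ^ w.length) * c)

/-- Helper for `Λ_B`: value on a reversed word. -/
noncomputable def lamRev {α β : Type*} (B : α → TA β) : Word α → TA β
  | [] => Finsupp.single [] 1
  | [i] => B i
  | i :: w => rsh (lamRev B w) (B i)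

/-- `Λ_B` on a word: `Λ_B e = e`, `Λ_B i = B i`, `Λ_B (w·i) = (Λ_B w) ≻ (Λ_B i)`. -/
noncomputable def lamW {α β : Type*} (B : α → TA β) (w : Word α) : TA β :=
  lamRev B w.reverse

/-- The linear map `Λ_B : T(ℝ^t) → T(ℝ^d)` induced by `B` on letters. -/
noncomputable def Lam {α β : Type*} (B : α → TA β) (x : TA α) : TA β :=
  x.sum fun w c => c • lamW B w

/-- `splitEmb e j n w = Σ_{w = u₁⋯uₙ} e_j(u₁) ⧢ e_{j+1}(u₂) ⧢ ⋯ ⧢ e_{j+n−1}(uₙ)`,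
the sum over all splittings of `w` into `n` consecutive (possibly empty) factors,
each factor relabelled letterwise by `e`. -/
noncomputable def splitEmb {α β : Type*} (e : ℕ → α → β) : ℕ → ℕ → Word α → TA β
  | _, 0, w => if w.isEmpty then Finsupp.single ([] : Word β) (1 : ℝ) else 0
  | j, k + 1, w => ∑ m ∈ Finset.range (w.length + 1),
      sh (Finsupp.single ((w.take m).map (e j)) (1 : ℝ)) (splitEmb e (j + 1) k (w.drop m))

/-- `Σ_{x=uv} f(u)·v`: deconcatenate, evaluate the functional `f` on prefixes. -/
noncomputable def leftAct {α : Type*} (f : Word α → ℝ) (x : TA α) : TA α :=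
  x.sum fun w c => c • ∑ k ∈ Finset.range (w.length + 1),
    f (w.take k) • Finsupp.single (w.drop k) (1 : ℝ)

/-- `Σ_{x=uv} u·f(v)`: deconcatenate, evaluate the functional `f` on suffixes. -/
noncomputable def rightAct {α : Type*} (f : Word α → ℝ) (x : TA α) : TA α :=
  x.sum fun w c => c • ∑ k ∈ Finset.range (w.length + 1),
    f (w.drop k) • Finsupp.single (w.take k) (1 : ℝ)

/-- A raw path: a time horizon `T` together with a map `ℝ → ℝ^α`
(only the restriction to `[0,T]` is relevant). -/
structure RawPath (α : Type*) where
  T : ℝ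
  toFun : ℝ → α → ℝ

/-- A path: positive time horizon, continuous on `[0,T]` and piecewise continuously
differentiable there (witnessed by a partition `0 = τ₀ < τ₁ < ⋯ < τₙ = T`). -/
def IsPath {α : Type*} (X : RawPath α) : Prop :=
  0 < X.T ∧ (∀ i, ContinuousOn (fun t => X.toFun t i) (Set.Icc 0 X.T)) ∧
    ∃ (n : ℕ) (τ : Fin (n + 1) → ℝ), StrictMono τ ∧ τ 0 = 0 ∧ τ (Fin.last n) = X.T ∧
      ∀ (k : Fin n) (i : α), ContDiffOn ℝ 1 (fun t => X.toFun t i)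
        (Set.Icc (τ k.castSucc) (τ k.succ))

/-- Iterated integrals, by recursion on the reversed word:
`sigRev X (i :: w) t = ∫₀ᵗ ⟨σ(X)ₛ, w.reverse⟩ dX⁽ⁱ⁾(s)`. -/
noncomputable def sigRev {α : Type*} (X : ℝ → α → ℝ) : Word α → ℝ → ℝ
  | [], _ => 1
  | i :: w, t => ∫ s in (0 : ℝ)..t, sigRev X w s * deriv (fun u => X u i) s

/-- `⟨σ(X)_t, w⟩`, the iterated-integrals signature of `X` stopped at time `t`. -/
noncomputable def sigUpTo {α : Type*} (X : RawPath α) (t : ℝ) (w : Word α) : ℝ :=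
  sigRev X.toFun w.reverse t

/-- `⟨σ(X), w⟩`, the iterated-integrals signature of the path `X` at a word `w`. -/
noncomputable def sig {α : Type*} (X : RawPath α) (w : Word α) : ℝ :=
  sigUpTo X X.T w

/-- Pairing of a word-indexed functional with an element of `T(ℝ^d)`. -/
noncomputable def pairF {α : Type*} (f : Word α → ℝ) (x : TA α) : ℝ :=
  x.sum fun w c => c * f w

/-- `⟨σ(X), x⟩` for a tensor `x ∈ T(ℝ^d)` (linear in `x`). -/
noncomputable def pair {α : Type*} (X : RawPath α) (x : TA α) : ℝ :=
  Finsupp.linearCombination ℝ (sig X) x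

/-- The path variety `𝒱(W)` of all paths whose signature kills every element of `W`. -/
def V {α : Type*} (W : Set (TA α)) : Set (RawPath α) :=
  {X | IsPath X ∧ ∀ x ∈ W, pair X x = 0}

/-- `ℐ(M)`, the space of tensors killed by the signature of every path in `M`. -/
noncomputable def Idl {α : Type*} (M : Set (RawPath α)) : Submodule ℝ (TA α) :=
  ⨅ X ∈ M, LinearMap.ker (Finsupp.linearCombination ℝ (sig X))

/-- Concatenation `X ⊔ Y` of paths. -/
noncomputable def concat {α : Type*} (X Y : RawPath α) : RawPath α where
  T := X.T + Y.T
  toFun := fun t i =>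
    if t ≤ X.T then X.toFun t i else Y.toFun (t - X.T) i + X.toFun X.T i - Y.toFun 0 i

/-- Time reversal `⟵X`. -/
def timeRev {α : Type*} (X : RawPath α) : RawPath α :=
  ⟨X.T, fun t i => X.toFun (X.T - t) i⟩

/-- `concatIter X n = X^{⊔(n+1)}`. -/
noncomputable def concatIter {α : Type*} (X : RawPath α) : ℕ → RawPath α
  | 0 => X
  | n + 1 => concat (concatIter X n) X

/-- `X^{⊔n}`, the `n`-fold concatenation of `X` with itself (intended for `n ≥ 1`). -/
noncomputable def concatPow {α : Type*} (X : RawPath α) (n : ℕ) : RawPath α :=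
  concatIter X (n - 1)

/-- `concatFold f k = f 0 ⊔ f 1 ⊔ ⋯ ⊔ f k`. -/
noncomputable def concatFold {α : Type*} (f : ℕ → RawPath α) : ℕ → RawPath α
  | 0 => f 0
  | k + 1 => concat (concatFold f k) (f (k + 1))

/-- The deconcatenation coproduct `Δ : T(ℝ^d) → T(ℝ^d) ⊗ T(ℝ^d)`,
`Δw = Σ_{w=uv} u ⊗ v`. -/
noncomputable def deconc {α : Type*} (x : TA α) : TensorProduct ℝ (TA α) (TA α) :=
  x.sum fun w c => c • ∑ k ∈ Finset.range (w.length + 1),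
    (Finsupp.single (w.take k) (1 : ℝ)) ⊗ₜ[ℝ] (Finsupp.single (w.drop k) (1 : ℝ))


section Aux

open MeasureTheory Set intervalIntegral

variable {α : Type*}

lemma sigRev_nil (X : ℝ → α → ℝ) (t : ℝ) : sigRev X [] t = 1 := rfl

lemma sigRev_cons (X : ℝ → α → ℝ) (i : α) (w : Word α) (t : ℝ) :
    sigRev X (i :: w) t = ∫ s in (0:ℝ)..t, sigRev X w s * deriv (fun u => X u i) s := rfl

lemma continuousOn_union_closed {β : Type*} [TopologicalSpace β] {f : ℝ → β} {s t : Set ℝ}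
    (hs : IsClosed s) (ht : IsClosed t)
    (hfs : ContinuousOn f s) (hft : ContinuousOn f t) : ContinuousOn f (s ∪ t) := by
  intro x hx
  have hcs : ContinuousWithinAt f s x := by
    by_cases h : x ∈ s
    · exact hfs x h
    · exact continuousWithinAt_of_notMem_closure (by rwa [hs.closure_eq])
  have hct : ContinuousWithinAt f t x := by
    by_cases h : x ∈ t
    · exact hft x h
    · exact continuousWithinAt_of_notMem_closure (by rwa [ht.closure_eq])
  exact hcs.union hct

lemma integrableOn_deriv_of_contDiffOn {f : ℝ → ℝ} {a b : ℝ} (hab : a < b)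
    (h : ContDiffOn ℝ 1 f (Icc a b)) : IntegrableOn (deriv f) (Icc a b) := by
  have hu : UniqueDiffOn ℝ (Icc a b) := uniqueDiffOn_Icc hab
  have hc : ContinuousOn (derivWithin f (Icc a b)) (Icc a b) :=
    h.continuousOn_derivWithin hu le_rfl
  obtain ⟨M, hM⟩ := isCompact_Icc.exists_bound_of_continuousOn hc
  have hIoo : IntegrableOn (deriv f) (Ioo a b) := by
    refine Measure.integrableOn_of_bounded (M := M) (by simp) (measurable_deriv f).aestronglyMeasurable ?_
    refine (ae_restrict_iff' measurableSet_Ioo).mpr (ae_of_all _ ?_)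
    intro x hx
    rw [← derivWithin_of_mem_nhds (Icc_mem_nhds hx.1 hx.2)]
    exact hM x (Ioo_subset_Icc_self hx)
  exact hIoo.congr_set_ae (MeasureTheory.Ioo_ae_eq_Icc).symm

lemma IsPath.integrableOn_deriv {X : RawPath α} (h : IsPath X) (i : α) :
    IntegrableOn (deriv fun t => X.toFun t i) (Icc 0 X.T) := by
  obtain ⟨hT, hcont, n, τ, hmono, h0, hlast, hCD⟩ := h
  have key : ∀ k : Fin (n + 1),
      IntegrableOn (deriv fun t => X.toFun t i) (Icc (τ 0) (τ k)) := by
    intro k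
    induction k using Fin.induction with
    | zero =>
        rw [IntegrableOn, Icc_self, Measure.restrict_eq_zero.mpr (by simp)]
        exact integrable_zero_measure
    | succ k ih =>
        have hsplit : Icc (τ 0) (τ k.castSucc) ∪ Icc (τ k.castSucc) (τ k.succ)
            = Icc (τ 0) (τ k.succ) :=
          Icc_union_Icc_eq_Icc (hmono.monotone (Fin.zero_le _))
            (hmono (Fin.castSucc_lt_succ (i := k))).le
        rw [← hsplit]
        exact ih.union (integrableOn_deriv_of_contDiffOn (hmono (Fin.castSucc_lt_succ (i := k))) (hCD k i))
  have := key (Fin.last n)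
  rwa [h0, hlast] at this

lemma IsPath.sigRev_contAndInt {X : RawPath α} (h : IsPath X) (w : Word α) :
    ContinuousOn (sigRev X.toFun w) (Icc 0 X.T) ∧
      ∀ i, IntegrableOn (fun s => sigRev X.toFun w s * deriv (fun u => X.toFun u i) s)
        (Icc 0 X.T) := by
  have hT := h.1
  induction w with
  | nil =>
      refine ⟨continuousOn_const, fun i => ?_⟩
      have := h.integrableOn_deriv i
      simpa [sigRev_nil] using this
  | cons i w ih =>
      have hint : IntervalIntegrable
          (fun s => sigRev X.toFun w s * deriv (fun u => X.toFun u i) s) volume 0 X.T :=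
        ((ih.2 i).mono_set (uIcc_of_le hT.le).subset).intervalIntegrable
      have hcont : ContinuousOn (sigRev X.toFun (i :: w)) (Icc 0 X.T) := by
        have := continuousOn_primitive_interval' hint (left_mem_uIcc (a := (0:ℝ)) (b := X.T))
        rw [uIcc_of_le hT.le] at this
        exact this
      refine ⟨hcont, fun j => ?_⟩
      obtain ⟨M, hM⟩ := isCompact_Icc.exists_bound_of_continuousOn hcont
      refine (h.integrableOn_deriv j).bdd_mul (c := M)
        (hcont.aestronglyMeasurable measurableSet_Icc) ?_
      exact (ae_restrict_iff' measurableSet_Icc).mpr (ae_of_all _ hM)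

lemma IsPath.intervalIntegrable_sig {X : RawPath α} (h : IsPath X) (w : Word α) (i : α)
    {a b : ℝ} (ha : a ∈ Icc 0 X.T) (hb : b ∈ Icc 0 X.T) :
    IntervalIntegrable (fun s => sigRev X.toFun w s * deriv (fun u => X.toFun u i) s)
      volume a b :=
  (((h.sigRev_contAndInt w).2 i).mono_set (uIcc_subset_Icc ha hb)).intervalIntegrable

lemma concat_toFun_of_le {X Y : RawPath α} {t : ℝ} (ht : t ≤ X.T) (i : α) :
    (concat X Y).toFun t i = X.toFun t i := if_pos ht

lemma concat_toFun_of_not_le {X Y : RawPath α} {t : ℝ} (ht : ¬ t ≤ X.T) (i : α) :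
    (concat X Y).toFun t i = Y.toFun (t - X.T) i + X.toFun X.T i - Y.toFun 0 i := if_neg ht

lemma deriv_concat_left {X Y : RawPath α} (i : α) {s : ℝ} (hs : s < X.T) :
    deriv (fun u => (concat X Y).toFun u i) s = deriv (fun u => X.toFun u i) s := by
  apply Filter.EventuallyEq.deriv_eq
  filter_upwards [Iio_mem_nhds hs] with u hu
  exact concat_toFun_of_le (le_of_lt hu) i

lemma deriv_concat_right {X Y : RawPath α} (i : α) {s : ℝ} (hs : X.T < s) :
    deriv (fun u => (concat X Y).toFun u i) s = deriv (fun u => Y.toFun u i) (s - X.T) := by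
  have h1 : deriv (fun u => (concat X Y).toFun u i) s
      = deriv (fun u => (fun v => Y.toFun v i + (X.toFun X.T i - Y.toFun 0 i)) (u - X.T)) s := by
    apply Filter.EventuallyEq.deriv_eq
    filter_upwards [Ioi_mem_nhds hs] with u hu
    rw [concat_toFun_of_not_le (not_le.mpr hu) i]
    ring
  have h2 := deriv_comp_sub_const (fun v => Y.toFun v i + (X.toFun X.T i - Y.toFun 0 i)) X.T s
  rw [h1]
  exact h2.trans (deriv_add_const _)

lemma ae_ne (c : ℝ) : ∀ᵐ s : ℝ, s ≠ c := by
  rw [Filter.Eventually]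
  rw [MeasureTheory.mem_ae_iff]
  have : {s : ℝ | s ≠ c}ᶜ = {c} := by ext x; simp [not_not]
  rw [this]
  exact measure_singleton c

lemma sigRev_concat_left {X Y : RawPath α} (w : Word α) :
    ∀ {t : ℝ}, t ∈ Icc 0 X.T →
      sigRev (concat X Y).toFun w t = sigRev X.toFun w t := by
  induction w with
  | nil => intro t _; rfl
  | cons i w ih =>
      intro t ht
      rw [sigRev_cons, sigRev_cons]
      apply intervalIntegral.integral_congr_ae
      filter_upwards [ae_ne X.T] with s hsne hs
      rw [uIoc_of_le ht.1] at hs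
      have hsT : s < X.T := lt_of_le_of_ne (hs.2.trans ht.2) hsne
      rw [ih ⟨hs.1.le, hsT.le⟩, deriv_concat_left i hsT]

end Aux

section Aux2

open MeasureTheory Set intervalIntegral

variable {α : Type*}

lemma isPath_concat {X Y : RawPath α} (hX : IsPath X) (hY : IsPath Y) :
    IsPath (concat X Y) := by
  obtain ⟨hTX, hcX, n, τ, hmτ, hτ0, hτl, hCX⟩ := hX
  obtain ⟨hTY, hcY, m, σ, hmσ, hσ0, hσl, hCY⟩ := hY
  have hm1 : 1 ≤ m := by
    rcases Nat.eq_zero_or_pos m with rfl | h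
    · exfalso; rw [← hσl, show Fin.last 0 = 0 from rfl, hσ0] at hTY; exact lt_irrefl 0 hTY
    · exact h
  have hZT : (concat X Y).T = X.T + Y.T := rfl
  have hτle : ∀ j : Fin (n + 1), τ j ≤ X.T := by
    intro j; rw [← hτl]; exact hmτ.monotone (Fin.le_last j)
  have hσnn : ∀ j : Fin (m + 1), 0 ≤ σ j := by
    intro j; rw [← hσ0]; exact hmσ.monotone (Fin.zero_le j)
  set τ' : Fin (n + m + 1) → ℝ := fun k =>
    if h : (k : ℕ) ≤ n then τ ⟨(k : ℕ), by omega⟩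
    else X.T + σ ⟨(k : ℕ) - n, by have := k.isLt; omega⟩ with hτ'def
  have hlo : ∀ (k : Fin (n + m + 1)) (h : (k : ℕ) ≤ n), τ' k = τ ⟨(k : ℕ), by omega⟩ := by
    intro k h; simp only [hτ'def]; rw [dif_pos h]
  have hhi : ∀ (k : Fin (n + m + 1)) (h : n ≤ (k : ℕ)),
      τ' k = X.T + σ ⟨(k : ℕ) - n, by have := k.isLt; omega⟩ := by
    intro k h
    by_cases h' : (k : ℕ) ≤ n
    · have hkn : (k : ℕ) = n := le_antisymm h' h
      rw [hlo k h']
      have e1 : τ ⟨(k : ℕ), by omega⟩ = X.T := by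
        rw [← hτl]; congr 1; simp only [Fin.ext_iff, Fin.val_last]; exact hkn
      have e2 : σ ⟨(k : ℕ) - n, by have := k.isLt; omega⟩ = 0 := by
        rw [← hσ0]; congr 1; simp only [Fin.ext_iff, Fin.val_zero]; omega
      rw [e1, e2]; ring
    · simp only [hτ'def]; rw [dif_neg h']
  refine ⟨by rw [hZT]; positivity, ?_, ?_⟩
  · -- continuity
    intro i
    rw [hZT, ← Icc_union_Icc_eq_Icc hTX.le (le_add_of_nonneg_right hTY.le)]
    apply continuousOn_union_closed isClosed_Icc isClosed_Icc
    · refine (hcX i).congr ?_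
      intro t ht
      exact concat_toFun_of_le ht.2 i
    · have hg : ContinuousOn
          (fun t => Y.toFun (t - X.T) i + X.toFun X.T i - Y.toFun 0 i)
          (Icc X.T (X.T + Y.T)) := by
        have hsub : ContinuousOn (fun t : ℝ => t - X.T) (Icc X.T (X.T + Y.T)) :=
          (continuous_id.sub continuous_const).continuousOn
        have hmaps : MapsTo (fun t : ℝ => t - X.T) (Icc X.T (X.T + Y.T)) (Icc 0 Y.T) := by
          intro t ht
          simp only [mem_Icc] at ht ⊢
          constructor <;> [linarith [ht.1]; linarith [ht.2]]
        exact (((hcY i).comp hsub hmaps).add continuousOn_const).sub continuousOn_const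
      refine hg.congr ?_
      intro t ht
      show (concat X Y).toFun t i = Y.toFun (t - X.T) i + X.toFun X.T i - Y.toFun 0 i
      by_cases h : t ≤ X.T
      · have het : t = X.T := le_antisymm h ht.1
        rw [concat_toFun_of_le h i, het]
        simp
      · exact concat_toFun_of_not_le h i
  · -- partition
    refine ⟨n + m, τ', ?_, ?_, ?_, ?_⟩
    · -- StrictMono
      intro a b hab
      have hab' : (a : ℕ) < (b : ℕ) := hab
      by_cases hbn : (b : ℕ) ≤ n
      · have han : (a : ℕ) ≤ n := by omega
        rw [hlo a han, hlo b hbn]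
        exact hmτ (by simp only [Fin.mk_lt_mk]; exact hab')
      · rw [hhi b (by omega)]
        have hσb : 0 < σ ⟨(b : ℕ) - n, by have := b.isLt; omega⟩ := by
          rw [← hσ0]
          exact hmσ (by simp only [Fin.lt_def, Fin.val_zero]; omega)
        by_cases han : (a : ℕ) ≤ n
        · rw [hlo a han]
          calc τ ⟨(a : ℕ), by omega⟩ ≤ X.T := hτle _
          _ < X.T + σ ⟨(b : ℕ) - n, by have := b.isLt; omega⟩ := by linarith
        · rw [hhi a (by omega)]
          have : σ ⟨(a : ℕ) - n, by have := a.isLt; omega⟩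
              < σ ⟨(b : ℕ) - n, by have := b.isLt; omega⟩ :=
            hmσ (by simp only [Fin.lt_def]; omega)
          linarith
    · rw [hlo 0 (by simp), ← hτ0]
      congr 1
    · rw [hhi (Fin.last (n + m)) (by simp only [Fin.val_last]; omega), hZT]
      congr 1
      rw [← hσl]
      congr 1
      simp only [Fin.ext_iff, Fin.val_last]
      omega
    · intro k i
      by_cases hk : (k : ℕ) < n
      · set jX : Fin n := ⟨(k : ℕ), hk⟩ with hjX
        have e1 : τ' k.castSucc = τ jX.castSucc := by
          rw [hlo _ (by simp only [Fin.coe_castSucc]; omega)]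
          congr 1
        have e2 : τ' k.succ = τ jX.succ := by
          rw [hlo _ (by simp only [Fin.val_succ]; omega)]
          congr 1
        rw [e1, e2]
        refine (hCX jX i).congr ?_
        intro t ht
        exact concat_toFun_of_le (le_trans ht.2 (hτle _)) i
      · -- Y piece
        have hkn : n ≤ (k : ℕ) := by omega
        have hkm : (k : ℕ) < n + m := k.isLt
        have hj : ((k : ℕ) - n) < m := by omega
        set jY : Fin m := ⟨(k : ℕ) - n, hj⟩ with hjY
        have e1 : τ' k.castSucc = X.T + σ jY.castSucc := by
          rw [hhi _ (by simp only [Fin.coe_castSucc]; omega)]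
          congr 1
        have e2 : τ' k.succ = X.T + σ jY.succ := by
          rw [hhi _ (by simp only [Fin.val_succ]; omega)]
          congr 1
          congr 1
          apply Fin.ext
          rw [hjY]
          simp only [Fin.val_succ, Fin.val_mk]
          omega
        rw [e1, e2]
        have hY' := hCY jY i
        have hg : ContDiffOn ℝ 1
            (fun t => Y.toFun (t - X.T) i + X.toFun X.T i - Y.toFun 0 i)
            (Icc (X.T + σ jY.castSucc) (X.T + σ jY.succ)) := by
          have hsub : ContDiffOn ℝ 1 (fun t : ℝ => t - X.T)
              (Icc (X.T + σ jY.castSucc) (X.T + σ jY.succ)) :=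
            (contDiff_id.sub contDiff_const).contDiffOn
          have hmaps : MapsTo (fun t : ℝ => t - X.T)
              (Icc (X.T + σ jY.castSucc) (X.T + σ jY.succ))
              (Icc (σ jY.castSucc) (σ jY.succ)) := by
            intro t ht
            simp only [mem_Icc] at ht ⊢
            constructor <;> [linarith [ht.1]; linarith [ht.2]]
          exact ((hY'.comp hsub hmaps).add contDiffOn_const).sub contDiffOn_const
        refine hg.congr ?_
        intro t ht
        show (concat X Y).toFun t i = Y.toFun (t - X.T) i + X.toFun X.T i - Y.toFun 0 i
        have htge : X.T ≤ t := le_trans (by linarith [hσnn jY.castSucc]) ht.1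
        by_cases h : t ≤ X.T
        · have het : t = X.T := le_antisymm h htge
          rw [concat_toFun_of_le h i, het]
          simp
        · exact concat_toFun_of_not_le h i

end Aux2

section Aux3

open MeasureTheory Set intervalIntegral

variable {α : Type*}

lemma chen_aux {X Y : RawPath α} (hX : IsPath X) (hY : IsPath Y) (w : Word α) :
    ∀ {t : ℝ}, t ∈ Icc X.T (X.T + Y.T) →
      sigRev (concat X Y).toFun w t
        = ∑ k ∈ Finset.range (w.length + 1),
            sigRev X.toFun (w.drop k) X.T * sigRev Y.toFun (w.take k) (t - X.T) := by
  have hZ : IsPath (concat X Y) := isPath_concat hX hY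
  have hTX := hX.1
  have hTY := hY.1
  have hXT_mem : X.T ∈ Icc (0:ℝ) (concat X Y).T := ⟨hTX.le, le_add_of_nonneg_right hTY.le⟩
  induction w with
  | nil =>
      intro t _
      simp [sigRev_nil]
  | cons i w ih =>
      intro t ht
      have ht_mem : t ∈ Icc (0:ℝ) (concat X Y).T := ⟨hTX.le.trans ht.1, ht.2⟩
      have htY : t - X.T ∈ Icc (0:ℝ) Y.T := ⟨by linarith [ht.1], by linarith [ht.2]⟩
      have h1 : IntervalIntegrable
          (fun s => sigRev (concat X Y).toFun w s * deriv (fun u => (concat X Y).toFun u i) s)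
          volume 0 X.T :=
        hZ.intervalIntegrable_sig w i ⟨le_rfl, hTX.le.trans hXT_mem.2⟩ hXT_mem
      have h2 : IntervalIntegrable
          (fun s => sigRev (concat X Y).toFun w s * deriv (fun u => (concat X Y).toFun u i) s)
          volume X.T t :=
        hZ.intervalIntegrable_sig w i hXT_mem ht_mem
      rw [sigRev_cons, ← intervalIntegral.integral_add_adjacent_intervals h1 h2]
      -- first piece
      have e1 : (∫ s in (0:ℝ)..X.T,
            sigRev (concat X Y).toFun w s * deriv (fun u => (concat X Y).toFun u i) s)
          = sigRev X.toFun (i :: w) X.T := by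
        rw [← sigRev_cons]
        exact sigRev_concat_left (i :: w) ⟨hTX.le, le_rfl⟩
      -- second piece
      have e2 : (∫ s in X.T..t,
            sigRev (concat X Y).toFun w s * deriv (fun u => (concat X Y).toFun u i) s)
          = ∑ k ∈ Finset.range (w.length + 1),
              sigRev X.toFun (w.drop k) X.T * sigRev Y.toFun (i :: w.take k) (t - X.T) := by
        have step1 : (∫ s in X.T..t,
              sigRev (concat X Y).toFun w s * deriv (fun u => (concat X Y).toFun u i) s)
            = ∫ s in X.T..t, (fun σ' => ∑ k ∈ Finset.range (w.length + 1),
                sigRev X.toFun (w.drop k) X.T *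
                  (sigRev Y.toFun (w.take k) σ' * deriv (fun u => Y.toFun u i) σ')) (s - X.T) := by
          apply intervalIntegral.integral_congr_ae
          refine ae_of_all _ ?_
          intro s hs
          rw [uIoc_of_le ht.1] at hs
          have hsgt : X.T < s := hs.1
          have hs_mem : s ∈ Icc X.T (X.T + Y.T) := ⟨hsgt.le, hs.2.trans ht.2⟩
          rw [ih hs_mem, deriv_concat_right i hsgt]
          rw [Finset.sum_mul]
          simp only [mul_assoc]
        rw [step1]
        have hcs := intervalIntegral.integral_comp_sub_right (a := X.T) (b := t)
          (fun σ' => ∑ k ∈ Finset.range (w.length + 1),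
            sigRev X.toFun (w.drop k) X.T *
              (sigRev Y.toFun (w.take k) σ' * deriv (fun u => Y.toFun u i) σ')) X.T
        rw [hcs, sub_self]
        have step2 : (∫ σ' in (0:ℝ)..(t - X.T), ∑ k ∈ Finset.range (w.length + 1),
                sigRev X.toFun (w.drop k) X.T *
                  (sigRev Y.toFun (w.take k) σ' * deriv (fun u => Y.toFun u i) σ'))
            = ∑ k ∈ Finset.range (w.length + 1), ∫ σ' in (0:ℝ)..(t - X.T),
                sigRev X.toFun (w.drop k) X.T *
                  (sigRev Y.toFun (w.take k) σ' * deriv (fun u => Y.toFun u i) σ') := by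
          apply intervalIntegral.integral_finset_sum
          intro k _
          exact (hY.intervalIntegrable_sig (w.take k) i ⟨le_rfl, hTY.le⟩ htY).const_mul _
        rw [step2]
        refine Finset.sum_congr rfl ?_
        intro k _
        rw [intervalIntegral.integral_const_mul, ← sigRev_cons]
      rw [e1, e2]
      conv_rhs => rw [Finset.sum_range_succ']
      simp only [List.drop_succ_cons, List.take_succ_cons, List.drop_zero, List.take_zero,
        List.length_cons, sigRev_nil, mul_one]
      exact add_comm _ _

lemma chen {X Y : RawPath α} (hX : IsPath X) (hY : IsPath Y) (w : Word α) :
    sig (concat X Y) w = ∑ k ∈ Finset.range (w.length + 1),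
      sig X (w.take k) * sig Y (w.drop k) := by
  have h := chen_aux hX hY w.reverse (t := X.T + Y.T)
    ⟨le_add_of_nonneg_right hY.1.le, le_rfl⟩
  have hsig : sig (concat X Y) w = sigRev (concat X Y).toFun w.reverse (X.T + Y.T) := rfl
  rw [hsig, h, add_sub_cancel_left, List.length_reverse]
  rw [← Finset.sum_range_reflect]
  refine Finset.sum_congr rfl ?_
  intro k hk
  rw [Finset.mem_range] at hk
  have hk' : k ≤ w.length := by omega
  have harith : w.length + 1 - 1 - k = w.length - k := by omega
  rw [harith]
  have hdrop : w.reverse.drop (w.length - k) = (w.take k).reverse := by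
    rw [List.drop_reverse]
    congr 1
    congr 1
    omega
  have htake : w.reverse.take (w.length - k) = (w.drop k).reverse := by
    rw [List.take_reverse]
    congr 1
    congr 1
    omega
  rw [hdrop, htake]
  rfl

end Aux3

/-- If `C ⊆ T(ℝ^d)` is a coideal of the deconcatenation coproduct
(`Δx ∈ C⊗T + T⊗C` for all `x ∈ C`), then the path variety `𝒱(C)` is stable under
concatenation. -/
theorem statement15 {d : ℕ} (C : Submodule ℝ (TA (Fin d)))
    (hC : ∀ x ∈ C, deconc x ∈
      Submodule.map₂ (TensorProduct.mk ℝ (TA (Fin d)) (TA (Fin d))) C ⊤ ⊔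
      Submodule.map₂ (TensorProduct.mk ℝ (TA (Fin d)) (TA (Fin d))) ⊤ C) :
    ∀ X Y : RawPath (Fin d),
      X ∈ V (C : Set (TA (Fin d))) → Y ∈ V (C : Set (TA (Fin d))) →
        concat X Y ∈ V (C : Set (TA (Fin d))) := by
  intro X Y hXV hYV
  obtain ⟨hXp, hXk⟩ := hXV
  obtain ⟨hYp, hYk⟩ := hYV
  refine ⟨isPath_concat hXp hYp, ?_⟩
  intro x hx
  classical
  set B : TA (Fin d) →ₗ[ℝ] TA (Fin d) →ₗ[ℝ] ℝ := LinearMap.mk₂ ℝ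
    (fun u v => pair X u * pair Y v)
    (fun u u' v => by simp [pair, map_add, add_mul])
    (fun c u v => by simp [pair, map_smul]; ring)
    (fun u v v' => by simp [pair, map_add, mul_add])
    (fun c u v => by simp [pair, map_smul]; ring) with hB
  set φ := TensorProduct.lift B with hφ
  have hφt : ∀ (u v : TA (Fin d)), φ (u ⊗ₜ[ℝ] v) = pair X u * pair Y v := by
    intro u v
    simp [hφ, hB, TensorProduct.lift.tmul]
    rfl
  have hker : φ (deconc x) = 0 := by
    have hle : (Submodule.map₂ (TensorProduct.mk ℝ (TA (Fin d)) (TA (Fin d))) C ⊤ ⊔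
        Submodule.map₂ (TensorProduct.mk ℝ (TA (Fin d)) (TA (Fin d))) ⊤ C) ≤ LinearMap.ker φ := by
      refine sup_le ?_ ?_
      · rw [Submodule.map₂_le]
        intro u hu v _
        simp [LinearMap.mem_ker, TensorProduct.mk_apply, hφt, hXk u hu]
      · rw [Submodule.map₂_le]
        intro u _ v hv
        simp [LinearMap.mem_ker, TensorProduct.mk_apply, hφt, hYk v hv]
    exact LinearMap.mem_ker.1 (hle (hC x hx))
  have key : φ (deconc x) = pair (concat X Y) x := by
    unfold deconc
    rw [map_finsuppSum]
    rw [pair, Finsupp.linearCombination_apply, Finsupp.sum, Finsupp.sum]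
    refine Finset.sum_congr rfl ?_
    intro w _
    rw [map_smul, map_sum]
    have hterm : ∀ k, φ ((Finsupp.single (w.take k) (1:ℝ)) ⊗ₜ[ℝ]
          (Finsupp.single (w.drop k) (1:ℝ)))
        = sig X (w.take k) * sig Y (w.drop k) := by
      intro k
      rw [hφt]
      simp [pair, Finsupp.linearCombination_single]
    simp only [hterm]
    rw [← chen hXp hYp w]
  rw [← key]
  exact hker

end PathVarieties
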